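/- Let U = x^E be a nonempty multisubset of C_n with e ∉ U and multiplicities at most 2 such that χ(Ū) ∈ {0, c} for all nonprincipal characters χ, where c ≠ 0. Let Γ_c = {z ∈ Z_n \ {0} : χ_z(Ū) = c} and δ_c = gcd(n, gcd of the elements of Γ_c). Then the set of z ∈ Z_n with multiplicity 0 in E equals the subgroup (n/δ_c)·Z_n. -/

import Mathlib

open scoped Classical

section Aux

variable {n : ℕ} {ζ : ℂ}

private lemma aux_pow_mod (hζ : IsPrimitiveRoot ζ n) (k : ℕ) : ζ ^ (k % n) = ζ ^ k := by
  conv_rhs => rw [← Nat.div_add_mod k n]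
  rw [pow_add, pow_mul, hζ.pow_eq_one, one_pow, one_mul]

private lemma aux_e_mul (hζ : IsPrimitiveRoot ζ n) (u v : ZMod n) :
    ζ ^ (u * v).val = ζ ^ (u.val * v.val) := by
  rw [ZMod.val_mul, aux_pow_mod hζ]

private lemma aux_e_add [NeZero n] (hζ : IsPrimitiveRoot ζ n) (u v : ZMod n) :
    ζ ^ (u + v).val = ζ ^ u.val * ζ ^ v.val := by
  rw [ZMod.val_add, aux_pow_mod hζ, pow_add]

private lemma aux_eq_zero [NeZero n] (hζ : IsPrimitiveRoot ζ n) {u : ZMod n} (hu : ζ ^ u.val = 1) :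
    u = 0 := by
  have h := (hζ.pow_eq_one_iff_dvd u.val).mp hu
  exact (ZMod.val_eq_zero u).mp (Nat.eq_zero_of_dvd_of_lt h (ZMod.val_lt u))

private lemma aux_orth [NeZero n] (hζ : IsPrimitiveRoot ζ n) (w : ZMod n) :
    ∑ z : ZMod n, ζ ^ (w * z).val = if w = 0 then (n : ℂ) else 0 := by
  have hsum : ∑ z : ZMod n, ζ ^ (w * z).val = ∑ k ∈ Finset.range n, (ζ ^ w.val) ^ k := by
    refine Finset.sum_nbij' (fun z : ZMod n => z.val) (fun k => (k : ZMod n)) ?_ ?_ ?_ ?_ ?_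
    · intro a _; exact Finset.mem_range.mpr (ZMod.val_lt a)
    · intro a _; exact Finset.mem_univ _
    · intro a _; exact ZMod.natCast_zmod_val a
    · intro a ha; exact ZMod.val_cast_of_lt (Finset.mem_range.mp ha)
    · intro a _; rw [aux_e_mul hζ, pow_mul]
  rw [hsum]
  split_ifs with h
  · subst h
    simp [ZMod.val_zero, ZMod.card]
  · have hx1 : ζ ^ w.val ≠ 1 := fun h1 => h (aux_eq_zero hζ h1)
    have hxn : (ζ ^ w.val) ^ n = 1 := by
      rw [← pow_mul, mul_comm, pow_mul, hζ.pow_eq_one, one_pow]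
    rw [geom_sum_eq hx1, hxn, sub_self, zero_div]

private lemma aux_abs_one [NeZero n] (hζ : IsPrimitiveRoot ζ n) (k : ℕ) : ‖ζ ^ k‖ = 1 := by
  have h1 : ‖ζ‖ = 1 :=
    Complex.norm_eq_one_of_pow_eq_one hζ.pow_eq_one (NeZero.ne n)
  rw [norm_pow, h1, one_pow]

private lemma aux_c_eq_one {u : ℂ} (habs : ‖u‖ = 1) (hre : u.re = 1) : u = 1 := by
  have h1 : Complex.normSq u = 1 := by rw [← Complex.sq_norm, habs, one_pow]
  rw [Complex.normSq_apply, hre] at h1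
  have h2 : u.im = 0 := mul_self_eq_zero.mp (by nlinarith)
  exact Complex.ext (by simp [hre]) (by simp [h2])

end Aux

/-- with `Γ_c = {z ≠ 0 : χ_z(Ū) = c}` and
`δ_c = gcd(n, gcd of the elements of Γ_c)`, the set of `z ∈ ZMod n` of multiplicity `0`
in `E` is exactly the subgroup `(n/δ_c)·Z_n`. -/
theorem complement_of_E_is_subgroup (n : ℕ) [NeZero n] (c : ℤ) (hc : c ≠ 0)
    (ζ : ℂ) (hζ : IsPrimitiveRoot ζ n)
    (E : Multiset (ZMod n)) (hne : E ≠ 0) (h0 : (0 : ZMod n) ∉ E)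
    (h2 : ∀ a : ZMod n, E.count a ≤ 2)
    (hchar : ∀ z : ZMod n, z ≠ 0 →
      (E.map (fun i => ζ ^ (i.val * z.val))).sum = 0 ∨
      (E.map (fun i => ζ ^ (i.val * z.val))).sum = (c : ℂ)) :
    ∀ z : ZMod n,
      E.count z = 0 ↔
        z ∈ AddSubgroup.zmultiples
          (((n / Nat.gcd n
              ((Finset.univ.filter (fun w : ZMod n => w ≠ 0 ∧
                (E.map (fun i => ζ ^ (i.val * w.val))).sum = (c : ℂ))).gcd
                ZMod.val) : ℕ) : ZMod n)) := by
  classical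
  intro a
  set T : Finset (ZMod n) := Finset.univ.filter (fun w : ZMod n => w ≠ 0 ∧
      (E.map (fun i => ζ ^ (i.val * w.val))).sum = (c : ℂ)) with hT
  set g : ℕ := T.gcd ZMod.val with hg
  set δ : ℕ := Nat.gcd n g with hδ
  set m : ℕ := n / δ with hm
  -- Step A : Fourier inversion
  have key : ∀ b : ZMod n,
      ∑ z : ZMod n, (E.map (fun i => ζ ^ (i.val * z.val))).sum * ζ ^ ((-b) * z).val
        = (E.count b : ℂ) * n := by
    intro b
    have hrw : ∀ z : ZMod n,
        (E.map (fun i => ζ ^ (i.val * z.val))).sum * ζ ^ ((-b) * z).val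
          = ∑ i ∈ E.toFinset, (E.count i : ℂ) * ζ ^ (((i - b) * z).val) := by
      intro z
      rw [Finset.sum_multiset_map_count, Finset.sum_mul]
      refine Finset.sum_congr rfl fun i _ => ?_
      rw [← aux_e_mul hζ i z, smul_mul_assoc, ← aux_e_add hζ (i * z) ((-b) * z)]
      have hz : (i * z) + ((-b) * z) = (i - b) * z := by ring
      rw [hz, nsmul_eq_mul]
    calc ∑ z : ZMod n, (E.map (fun i => ζ ^ (i.val * z.val))).sum * ζ ^ ((-b) * z).val
        = ∑ z : ZMod n, ∑ i ∈ E.toFinset, (E.count i : ℂ) * ζ ^ (((i - b) * z).val) :=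
          Finset.sum_congr rfl fun z _ => hrw z
      _ = ∑ i ∈ E.toFinset, ∑ z : ZMod n, (E.count i : ℂ) * ζ ^ (((i - b) * z).val) :=
          Finset.sum_comm
      _ = ∑ i ∈ E.toFinset, (E.count i : ℂ) * ∑ z : ZMod n, ζ ^ (((i - b) * z).val) := by
          refine Finset.sum_congr rfl fun i _ => ?_
          rw [Finset.mul_sum]
      _ = ∑ i ∈ E.toFinset, (E.count i : ℂ) * (if (i - b) = 0 then (n : ℂ) else 0) := by
          refine Finset.sum_congr rfl fun i _ => ?_
          rw [aux_orth hζ]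
      _ = ∑ i ∈ E.toFinset, (if i = b then (E.count i : ℂ) * n else 0) := by
          refine Finset.sum_congr rfl fun i _ => ?_
          by_cases h : i = b <;> simp [h, sub_eq_zero]
      _ = if b ∈ E.toFinset then (E.count b : ℂ) * n else 0 := Finset.sum_ite_eq' _ _ _
      _ = (E.count b : ℂ) * n := by
          by_cases h : b ∈ E.toFinset
          · simp [h]
          · have : E.count b = 0 := Multiset.count_eq_zero.mpr (by simpa using h)
            simp [h, this]
  -- Step B : split the sum
  have h0T : (0 : ZMod n) ∉ T := by simp [hT]
  have split : ∀ b : ZMod n,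
      ∑ z : ZMod n, (E.map (fun i => ζ ^ (i.val * z.val))).sum * ζ ^ ((-b) * z).val
        = (Multiset.card E : ℂ) + c * ∑ z ∈ T, ζ ^ ((-b) * z).val := by
    intro b
    have hsub : ∑ z : ZMod n, (E.map (fun i => ζ ^ (i.val * z.val))).sum * ζ ^ ((-b) * z).val
        = ∑ z ∈ insert 0 T, (E.map (fun i => ζ ^ (i.val * z.val))).sum * ζ ^ ((-b) * z).val := by
      refine (Finset.sum_subset (Finset.subset_univ _) ?_).symm
      intro z _ hz
      simp only [Finset.mem_insert, not_or] at hz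
      rcases hchar z hz.1 with h | h
      · rw [h, zero_mul]
      · exact absurd (Finset.mem_filter.mpr ⟨Finset.mem_univ _, hz.1, h⟩) hz.2
    rw [hsub, Finset.sum_insert h0T]
    have hz0 : (E.map (fun i => ζ ^ (i.val * (0 : ZMod n).val))).sum * ζ ^ ((-b) * 0).val
        = (Multiset.card E : ℂ) := by
      simp [ZMod.val_zero]
    rw [hz0, Finset.mul_sum]
    congr 1
    refine Finset.sum_congr rfl fun z hz => ?_
    have hFz : (E.map (fun i => ζ ^ (i.val * z.val))).sum = (c : ℂ) :=
      (Finset.mem_filter.mp hz).2.2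
    rw [hFz]
  -- Step C : main identity
  have hcard : (Multiset.card E : ℂ) = -(c * T.card) := by
    have h1 := (split 0).symm.trans (key 0)
    have hc0 : E.count (0 : ZMod n) = 0 := Multiset.count_eq_zero.mpr h0
    rw [hc0] at h1
    have hS0 : ∑ z ∈ T, ζ ^ ((-(0 : ZMod n)) * z).val = (T.card : ℂ) := by
      rw [Finset.sum_congr rfl fun z _ => by rw [neg_zero, zero_mul, ZMod.val_zero, pow_zero]]
      simp
    rw [hS0] at h1
    push_cast at h1
    linear_combination h1
  have main : ∀ b : ZMod n, (E.count b : ℂ) * n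
      = c * ((∑ z ∈ T, ζ ^ ((-b) * z).val) - T.card) := by
    intro b
    rw [← key b, split b, hcard]
    ring
  have hδpos : 0 < δ := Nat.gcd_pos_of_pos_left g (Nat.pos_of_ne_zero (NeZero.ne n))
  have hmδ : m * δ = n := Nat.div_mul_cancel (Nat.gcd_dvd_left n g)
  constructor
  · -- forward direction
    intro hcount
    have hS : ∑ z ∈ T, ζ ^ ((-a) * z).val = (T.card : ℂ) := by
      have h1 := main a
      rw [hcount] at h1
      push_cast at h1
      rw [zero_mul] at h1
      rcases mul_eq_zero.mp h1.symm with h | h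
      · exact absurd (by exact_mod_cast h) hc
      · linear_combination h
    have hone : ∀ z ∈ T, ζ ^ ((-a) * z).val = 1 := by
      have hle : ∀ z ∈ T, (ζ ^ ((-a) * z).val).re ≤ (1 : ℝ) := fun z _ =>
        (Complex.re_le_norm _).trans (le_of_eq (aux_abs_one hζ _))
      have hsumeq : ∑ z ∈ T, (ζ ^ ((-a) * z).val).re = ∑ z ∈ T, (1 : ℝ) := by
        have h3 := congrArg Complex.re hS
        rw [Complex.re_sum] at h3
        simpa using h3
      intro z hz
      have hre : (ζ ^ ((-a) * z).val).re = 1 :=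
        (Finset.sum_eq_sum_iff_of_le hle).mp hsumeq z hz
      exact aux_c_eq_one (aux_abs_one hζ _) hre
    have hdvd : ∀ z ∈ T, n ∣ a.val * z.val := by
      intro z hz
      have h4 : (-a) * z = 0 := aux_eq_zero hζ (hone z hz)
      have h5 : a * z = 0 := by
        rw [neg_mul] at h4
        exact neg_eq_zero.mp h4
      have h6 : (a * z).val = 0 := (ZMod.val_eq_zero _).mpr h5
      rw [ZMod.val_mul] at h6
      exact Nat.dvd_of_mod_eq_zero h6
    have hng : n ∣ a.val * g := by
      have h7 : n ∣ T.gcd (fun z => a.val * z.val) := Finset.dvd_gcd hdvd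
      rwa [Finset.gcd_mul_left, normalize_eq] at h7
    have hnδ : n ∣ a.val * δ := by
      have h8 : n ∣ Nat.gcd (a.val * n) (a.val * g) :=
        Nat.dvd_gcd (dvd_mul_left n a.val) hng
      rwa [Nat.gcd_mul_left] at h8
    have hma : m ∣ a.val := by
      have h9 : m * δ ∣ a.val * δ := by rwa [hmδ]
      exact (Nat.mul_dvd_mul_iff_right hδpos).mp h9
    obtain ⟨t, ht⟩ := hma
    rw [AddSubgroup.mem_zmultiples_iff]
    refine ⟨(t : ℤ), ?_⟩
    have h10 : ((t : ℤ)) • (((m : ℕ)) : ZMod n) = ((m * t : ℕ) : ZMod n) := by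
      rw [zsmul_eq_mul]
      push_cast
      ring
    rw [h10, ← ht, ZMod.natCast_zmod_val]
  · -- backward direction
    intro hmem
    rw [AddSubgroup.mem_zmultiples_iff] at hmem
    obtain ⟨k, hk⟩ := hmem
    have hS : ∑ z ∈ T, ζ ^ ((-a) * z).val = (T.card : ℂ) := by
      have hone : ∀ z ∈ T, ζ ^ ((-a) * z).val = 1 := by
        intro z hz
        have hδz : δ ∣ z.val := (Nat.gcd_dvd_right n g).trans (Finset.gcd_dvd hz)
        obtain ⟨t, ht⟩ := hδz
        have hmz : ((m : ℕ) : ZMod n) * z = 0 := by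
          have h11 : ((m : ℕ) : ZMod n) * z = ((m * z.val : ℕ) : ZMod n) := by
            rw [Nat.cast_mul, ZMod.natCast_zmod_val]
          rw [h11, ht, ← mul_assoc, hmδ]
          push_cast
          simp [ZMod.natCast_self]
        have haz : (-a) * z = 0 := by
          rw [← hk, neg_mul, smul_mul_assoc, hmz, smul_zero, neg_zero]
        rw [haz, ZMod.val_zero, pow_zero]
      rw [Finset.sum_congr rfl hone]
      simp
    have h12 := main a
    rw [hS, sub_self, mul_zero, mul_eq_zero] at h12
    rcases h12 with h | h
    · exact_mod_cast h
    · exact absurd (by exact_mod_cast h) (NeZero.ne n)
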